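/- Consider the C-commodity single-hop shared-buffer system with positive parameters satisfying c_{iK} > μ_i for every i and c_{iK}/μ_i > c_{jK}/μ_j whenever 1 ≤ i < j ≤ C. Suppose commodity ℓ is the only overloaded commodity: λ_ℓ > μ_ℓ, and λ_p < μ_p for all p ≠ ℓ. Let β_K ∈ (0,1] be determined by the commodity-ℓ saturation balance c_{ℓK} β_K = μ_ℓ. Then for each p ≠ ℓ the commodity-p subsystem has an equilibrium — i.e., there exist α, α' ∈ [0,1] with λ_p = c_{pK} · α · β_K and λ_p = μ_p · α' — if and only if λ_p ≤ min(μ_p, μ_ℓ c_{pK}/c_{ℓK}). In particular: for every p < ℓ one has μ_ℓ c_{pK}/c_{ℓK} > μ_p, so an equilibrium exists for all λ_p ∈ [0, μ_p); while for every p > ℓ one has μ_ℓ c_{pK}/c_{ℓK} < μ_p, so the set of arrival rates admitting an equilibrium shrinks to [0, μ_ℓ c_{pK}/c_{ℓK}], a strict subset of [0, μ_p). (This is the paper's Theorem 6.) -/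

import Mathlib

/-- **Theorem 6.**  In the `C`-commodity single-hop shared-buffer system with
positive parameters satisfying `c i > μ i` for every `i` and
`c i / μ i > c j / μ j` whenever `i < j`, suppose commodity `ℓ` is the only
overloaded commodity (`λ ℓ > μ ℓ`, and `λ p < μ p` for all `p ≠ ℓ`), and let
`βK ∈ (0,1]` be determined by the commodity-`ℓ` saturation balance
`c ℓ * βK = μ ℓ`.  Then for every `p ≠ ℓ` the commodity-`p` subsystem has an
equilibrium — `∃ α, α' ∈ [0,1]` with `λ p = c p * α * βK` and
`λ p = μ p * α'` — iff `λ p ≤ min (μ p) (μ ℓ * c p / c ℓ)`.  In particular,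
for `p < ℓ` one has `μ ℓ * c p / c ℓ > μ p` (so an equilibrium exists for the
given `λ p ∈ [0, μ p)`), while for `p > ℓ` one has `μ ℓ * c p / c ℓ < μ p`
and the set of arrival rates admitting an equilibrium shrinks to
`[0, μ ℓ * c p / c ℓ]`, a strict subset of `[0, μ p)`. -/
theorem stmt9 {C : ℕ} (c mu lam : Fin C → ℝ) (ℓ : Fin C) (betaK : ℝ)
    (hc : ∀ i, 0 < c i) (hmu : ∀ i, 0 < mu i) (hlam : ∀ i, 0 ≤ lam i)
    (hcap : ∀ i, mu i < c i)
    (hsort : ∀ i j : Fin C, i < j → c j / mu j < c i / mu i)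
    (hover : mu ℓ < lam ℓ) (hunder : ∀ p, p ≠ ℓ → lam p < mu p)
    (hbetaK : betaK ∈ Set.Ioc (0 : ℝ) 1)
    (hbal : c ℓ * betaK = mu ℓ) :
    ∀ p : Fin C, p ≠ ℓ →
      ((∃ α α' : ℝ, α ∈ Set.Icc (0 : ℝ) 1 ∧ α' ∈ Set.Icc (0 : ℝ) 1 ∧
          lam p = c p * α * betaK ∧ lam p = mu p * α') ↔
        lam p ≤ min (mu p) (mu ℓ * c p / c ℓ)) ∧
      (p < ℓ → mu p < mu ℓ * c p / c ℓ ∧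
        (∃ α α' : ℝ, α ∈ Set.Icc (0 : ℝ) 1 ∧ α' ∈ Set.Icc (0 : ℝ) 1 ∧
          lam p = c p * α * betaK ∧ lam p = mu p * α')) ∧
      (ℓ < p → mu ℓ * c p / c ℓ < mu p ∧
        Set.Icc (0 : ℝ) (mu ℓ * c p / c ℓ) ⊂ Set.Ico (0 : ℝ) (mu p)) := by

  obtain ⟨hb0, hb1⟩ := hbetaK
  have hbeq : betaK = mu ℓ / c ℓ := by
    rw [eq_div_iff (hc ℓ).ne']; linarith [hbal]
  intro p hp
  have hcp := hc p
  have hcl := hc ℓ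
  have hmup := hmu p
  have hmul := hmu ℓ
  have hkey : c p * betaK = mu ℓ * c p / c ℓ := by
    rw [hbeq]; field_simp
  have hcb : 0 < c p * betaK := mul_pos hcp hb0
  have hiff : (∃ α α' : ℝ, α ∈ Set.Icc (0 : ℝ) 1 ∧ α' ∈ Set.Icc (0 : ℝ) 1 ∧
      lam p = c p * α * betaK ∧ lam p = mu p * α') ↔
      lam p ≤ min (mu p) (mu ℓ * c p / c ℓ) := by
    constructor
    · rintro ⟨α, α', ⟨ha0, ha1⟩, ⟨ha'0, ha'1⟩, h1, h2⟩
      refine le_min ?_ ?_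
      · rw [h2]; nlinarith
      · rw [← hkey, h1]; nlinarith
    · intro h
      have h1 : lam p ≤ mu p := le_trans h (min_le_left _ _)
      have h2 : lam p ≤ c p * betaK := by
        rw [hkey]; exact le_trans h (min_le_right _ _)
      refine ⟨lam p / (c p * betaK), lam p / mu p, ⟨?_, ?_⟩, ⟨?_, ?_⟩, ?_, ?_⟩
      · exact div_nonneg (hlam p) hcb.le
      · rw [div_le_one hcb]; exact h2
      · exact div_nonneg (hlam p) hmup.le
      · rw [div_le_one hmup]; exact h1
      · field_simp
      · field_simp
  refine ⟨hiff, ?_, ?_⟩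
  · intro hlt
    have hs := hsort p ℓ hlt
    have : mu p < mu ℓ * c p / c ℓ := by
      rw [div_lt_div_iff₀ hmul hmup] at hs
      rw [lt_div_iff₀ hcl]; nlinarith
    refine ⟨this, hiff.mpr (le_min (le_of_lt (hunder p hp)) ?_)⟩
    exact le_of_lt (lt_trans (hunder p hp) this)
  · intro hlt
    have hs := hsort ℓ p hlt
    have hmain : mu ℓ * c p / c ℓ < mu p := by
      rw [div_lt_div_iff₀ hmup hmul] at hs
      rw [div_lt_iff₀ hcl]; nlinarith
    refine ⟨hmain, ?_⟩
    have ht0 : 0 ≤ mu ℓ * c p / c ℓ := by positivity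
    constructor
    · rintro x ⟨hx0, hx1⟩
      exact ⟨hx0, lt_of_le_of_lt hx1 hmain⟩
    · intro hsub
      have : (mu ℓ * c p / c ℓ + mu p) / 2 ∈ Set.Ico (0 : ℝ) (mu p) := by
        constructor <;> [positivity; linarith]
      have := hsub this
      simp only [Set.mem_Icc] at this
      linarith [this.2]
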